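/- Let t ≥ 2 and y = (-t + √t)/(t-1). If B is the incidence matrix of an SBIBD(4t-1, 2t, t), and S = B + y(J - B), then S·Sᵀ = ω·I with ω = 2t + (2t-1)·y², and moreover |y| = (t - √t)/(t-1) ≤ 1. -/
import Mathlib


open Matrix

/-- The all-ones matrix J. -/
def allOnes (n : ℕ) : Matrix (Fin n) (Fin n) ℝ := Matrix.of fun _ _ => 1

theorem stmt_8 (t : ℕ) (ht : 2 ≤ t) (y : ℝ)
    (hy : y = (-(t:ℝ) + Real.sqrt t) / ((t:ℝ) - 1))
    (B : Matrix (Fin (4*t-1)) (Fin (4*t-1)) ℝ)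
    (h01 : ∀ i j, B i j = 0 ∨ B i j = 1)
    (hBBt : B * Bᵀ = (t:ℝ) • (1 : Matrix (Fin (4*t-1)) (Fin (4*t-1)) ℝ) +
      (t:ℝ) • allOnes (4*t-1))
    (hrow : ∀ i, ∑ j, B i j = 2 * (t:ℝ))
    (S : Matrix (Fin (4*t-1)) (Fin (4*t-1)) ℝ)
    (hS : S = B + y • (allOnes (4*t-1) - B)) :
    S * Sᵀ = (2 * (t:ℝ) + (2 * (t:ℝ) - 1) * y ^ 2) • (1 : Matrix (Fin (4*t-1)) (Fin (4*t-1)) ℝ) ∧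
      |y| = ((t:ℝ) - Real.sqrt t) / ((t:ℝ) - 1) ∧ |y| ≤ 1 := by
  have ht1 : (1:ℝ) ≤ (t:ℝ) := by exact_mod_cast Nat.one_le_of_lt ht
  have htne : (t:ℝ) - 1 ≠ 0 := by
    have : (2:ℝ) ≤ (t:ℝ) := by exact_mod_cast ht
    linarith
  have htpos : (0:ℝ) < (t:ℝ) - 1 := by
    have : (2:ℝ) ≤ (t:ℝ) := by exact_mod_cast ht
    linarith
  have hs2 : Real.sqrt t * Real.sqrt t = (t:ℝ) := Real.mul_self_sqrt (by positivity)
  have hq : ((t:ℝ)-1)*y^2 + 2*(t:ℝ)*y + (t:ℝ) = 0 := by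
    rw [hy]; field_simp; ring_nf; nlinarith [hs2]
  refine ⟨?_, ?_, ?_⟩
  · have hn : ((4*t-1:ℕ):ℝ) = 4*(t:ℝ)-1 := by
      have h1 : 1 ≤ 4*t := by omega
      push_cast [h1]; ring
    have hJT : (allOnes (4*t-1))ᵀ = allOnes (4*t-1) := by
      ext i j; simp [allOnes]
    have hJJ : allOnes (4*t-1) * allOnes (4*t-1) = ((4*t-1:ℕ):ℝ) • allOnes (4*t-1) := by
      ext i j
      simp [allOnes, Matrix.mul_apply, Finset.sum_const]
    have hBJ : B * allOnes (4*t-1) = (2*(t:ℝ)) • allOnes (4*t-1) := by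
      ext i j
      simp [allOnes, Matrix.mul_apply, hrow i]
    have hJB : allOnes (4*t-1) * Bᵀ = (2*(t:ℝ)) • allOnes (4*t-1) := by
      ext i j
      simp [allOnes, Matrix.mul_apply, Matrix.transpose_apply, hrow j]
    have expand : S * Sᵀ = (1-y)^2 • (B*Bᵀ) + ((1-y)*y) • (B*allOnes (4*t-1))
        + (y*(1-y)) • (allOnes (4*t-1)*Bᵀ) + (y*y) • (allOnes (4*t-1)*allOnes (4*t-1)) := by
      rw [hS]
      simp only [transpose_add, transpose_smul, transpose_sub, hJT]
      simp only [mul_add, add_mul, sub_mul, mul_sub, smul_mul_assoc, mul_smul_comm]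
      module
    rw [expand, hBBt, hBJ, hJB, hJJ, hn]
    have h0 : (2*(t:ℝ) + (2*(t:ℝ)-1)*y^2) • (1 : Matrix (Fin (4*t-1)) (Fin (4*t-1)) ℝ)
        = ((2*(t:ℝ) + (2*(t:ℝ)-1)*y^2) - (((t:ℝ)-1)*y^2 + 2*(t:ℝ)*y + (t:ℝ))) • 1
          + (((t:ℝ)-1)*y^2 + 2*(t:ℝ)*y + (t:ℝ)) • allOnes (4*t-1) := by
      rw [hq]; simp
    rw [show (2 * (t:ℝ) + (2 * (t:ℝ) - 1) * y ^ 2) = 2*(t:ℝ) + (2*(t:ℝ)-1)*y^2 from rfl, h0]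
    module
  · have hyneg : y ≤ 0 := by
      rw [hy]
      apply div_nonpos_of_nonpos_of_nonneg _ (le_of_lt htpos)
      nlinarith [Real.one_le_sqrt.mpr ht1, hs2]
    rw [abs_of_nonpos hyneg, hy]
    field_simp
    ring
  · have h1s : (1:ℝ) ≤ Real.sqrt t := Real.one_le_sqrt.mpr ht1
    have hyneg : y ≤ 0 := by
      rw [hy]
      apply div_nonpos_of_nonpos_of_nonneg _ (le_of_lt htpos)
      nlinarith [h1s, hs2]
    rw [abs_of_nonpos hyneg, hy, ← neg_div, div_le_one htpos]
    nlinarith [h1s, hs2]
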